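/- Let Ḡ be an orientation of a finite undirected simple graph G=(V,E) satisfying Invariant 1 (no improving path between any two vertices), let {u,v} ∉ E with odeg(u,Ḡ) ≤ odeg(v,Ḡ), and let G̃ be the orientation of G + {u,v} obtained from Ḡ by adding the directed edge (u,v). Then either G̃ satisfies Invariant 1, or there exists an improving path in G̃ starting at u. -/

import Mathlib

open Finset

/-- An orientation of a simple graph `G`: a choice, for each edge `{u,v}` of `G`,
of exactly one of the directed edges `(u,v)`, `(v,u)`. -/
structure GraphOrientation {V : Type*} (G : SimpleGraph V) where
  dir : V → V → Bool
  dir_adj : ∀ u v, dir u v = true → G.Adj u v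
  exactly_one : ∀ u v, G.Adj u v → (dir u v = true ↔ ¬ dir v u = true)

/-- Out-degree of `v` w.r.t. a directed-edge relation `d`. -/
def outDegF {V : Type*} [Fintype V] (d : V → V → Bool) (v : V) : ℕ :=
  (Finset.univ.filter fun w => d v w = true).card

/-- Out-degree of a vertex in an orientation. -/
def GraphOrientation.outDeg {V : Type*} [Fintype V] {G : SimpleGraph V}
    (o : GraphOrientation G) (v : V) : ℕ := outDegF o.dir v

/-- Maximum out-degree `Δ` of an orientation. -/
def GraphOrientation.maxOutDeg {V : Type*} [Fintype V] {G : SimpleGraph V}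
    (o : GraphOrientation G) : ℕ := Finset.univ.sup o.outDeg

/-- `|E(S)|`: the number of edges of `G` with both endpoints in `S`. -/
def edgeCount {V : Type*} [Fintype V] [DecidableEq V] (G : SimpleGraph V)
    [DecidableRel G.Adj] (S : Finset V) : ℕ :=
  (G.edgeFinset.filter fun e => ∀ x ∈ e, x ∈ S).card

/-- A directed path in an orientation: a list of distinct vertices, of length at
least two (i.e. `k ≥ 1` edges), with consecutive vertices joined by directed edges. -/
def IsDirPath {V : Type*} {G : SimpleGraph V} (o : GraphOrientation G) (p : List V) : Prop :=
  p.Nodup ∧ 2 ≤ p.length ∧ List.Chain' (fun a b => o.dir a b = true) p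

/-- A directed path from `a` to `b`. -/
def IsPathFrom {V : Type*} {G : SimpleGraph V} (o : GraphOrientation G)
    (p : List V) (a b : V) : Prop :=
  IsDirPath o p ∧ p.head? = some a ∧ p.getLast? = some b

/-- Invariant 1: there is no improving path between any two vertices, i.e. no directed
path `⟨a,…,b⟩` with `odeg(a) > odeg(b) + 1`. -/
def Invariant1 {V : Type*} [Fintype V] {G : SimpleGraph V} (o : GraphOrientation G) : Prop :=
  ∀ p a b, IsPathFrom o p a b → o.outDeg a ≤ o.outDeg b + 1

/-- Invariant 2: there is no improving path starting at a vertex of maximum out-degree. -/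
def Invariant2 {V : Type*} [Fintype V] {G : SimpleGraph V} (o : GraphOrientation G) : Prop :=
  ∀ p a b, IsPathFrom o p a b → o.outDeg a = o.maxOutDeg → o.outDeg a ≤ o.outDeg b + 1

/-- Flipping the directed path `p`: every directed edge `(v_i, v_{i+1})` of `p`
is replaced by the reversed edge `(v_{i+1}, v_i)`; all other edges are unchanged. -/
def flipDir {V : Type*} [DecidableEq V] (d : V → V → Bool) (p : List V) : V → V → Bool :=
  fun a b => if (a, b) ∈ p.zip p.tail ∨ (b, a) ∈ p.zip p.tail then d b a else d a b

/-- `G + {u,v}`: the graph obtained from `G` by inserting the edge `{u,v}`. -/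
def addE {V : Type*} (G : SimpleGraph V) (u v : V) : SimpleGraph V :=
  G ⊔ SimpleGraph.fromEdgeSet {s(u, v)}

/-- `G − {u,v}`: the graph obtained from `G` by deleting the edge `{u,v}`. -/
def delE {V : Type*} (G : SimpleGraph V) (u v : V) : SimpleGraph V :=
  G.deleteEdges {s(u, v)}

lemma chain_split {α : Type*} (R : α → α → Prop) (u v : α) :
    ∀ p : List α, List.Chain' (fun a b => R a b ∨ (a = u ∧ b = v)) p →
      List.Chain' R p ∨ ∃ l₁ l₂, p = l₁ ++ u :: v :: l₂
  | [], _ => Or.inl List.isChain_nil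
  | [x], _ => Or.inl (List.isChain_singleton x)
  | x :: y :: t, h => by
      simp only [List.Chain', List.isChain_cons_cons] at h
      obtain ⟨hxy, ht⟩ := h
      rcases hxy with hR | ⟨rfl, rfl⟩
      · rcases chain_split R u v (y :: t) ht with hc | ⟨l₁, l₂, heq⟩
        · exact Or.inl (List.isChain_cons_cons.mpr ⟨hR, hc⟩)
        · exact Or.inr ⟨x :: l₁, l₂, by rw [heq]; rfl⟩
      · exact Or.inr ⟨[], t, rfl⟩

lemma chain_restrict {α : Type*} (R : α → α → Prop) (u v : α) :
    ∀ p : List α, List.Chain' (fun a b => R a b ∨ (a = u ∧ b = v)) p →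
      (∀ x ∈ p.tail, x ≠ v) → List.Chain' R p
  | [], _, _ => List.isChain_nil
  | [x], _, _ => List.isChain_singleton x
  | x :: y :: t, h, hv => by
      simp only [List.Chain', List.isChain_cons_cons] at h
      obtain ⟨hxy, ht⟩ := h
      refine List.isChain_cons_cons.mpr ⟨?_, chain_restrict R u v (y :: t) ht ?_⟩
      · rcases hxy with hR | ⟨_, rfl⟩
        · exact hR
        · exact absurd rfl (hv _ List.mem_cons_self)
      · intro z hz
        exact hv z (List.mem_cons_of_mem _ hz)

lemma outDeg_insert {V : Type*} [Fintype V] [DecidableEq V] {G : SimpleGraph V}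
    (o : GraphOrientation G) (u v : V) (hE : ¬ G.Adj u v)
    (ot : GraphOrientation (addE G u v))
    (hot : ∀ a b, ot.dir a b = true ↔ (o.dir a b = true ∨ (a = u ∧ b = v))) (a : V) :
    ot.outDeg a = if a = u then o.outDeg a + 1 else o.outDeg a := by
  have hfalse : ¬ o.dir u v = true := fun h => hE (o.dir_adj u v h)
  unfold GraphOrientation.outDeg outDegF
  by_cases hau : a = u
  · subst hau
    rw [if_pos rfl]
    have hins : (Finset.univ.filter fun w => ot.dir a w = true)
        = insert v (Finset.univ.filter fun w => o.dir a w = true) := by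
      ext w
      simp only [Finset.mem_filter, Finset.mem_univ, true_and, Finset.mem_insert, hot]
      tauto
    rw [hins, Finset.card_insert_of_notMem (by simp [hfalse])]
  · rw [if_neg hau]
    congr 1
    ext w
    simp only [Finset.mem_filter, Finset.mem_univ, true_and, hot]
    constructor
    · rintro (h | ⟨rfl, -⟩)
      · exact h
      · exact absurd rfl hau
    · exact Or.inl


/-- Insert an edge `{u,v} ∉ E` with `odeg(u) ≤ odeg(v)` into an
orientation satisfying Invariant 1, directed as `(u,v)`. Then either the resulting
orientation `G̃` satisfies Invariant 1, or there is an improving path in `G̃`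
starting at `u`. -/
theorem insert_invariant1_or_improving_from_u {V : Type*} [Fintype V] [DecidableEq V]
    {G : SimpleGraph V} (o : GraphOrientation G) (hinv : Invariant1 o)
    (u v : V) (hne : u ≠ v) (hE : ¬ G.Adj u v) (hdeg : o.outDeg u ≤ o.outDeg v)
    (ot : GraphOrientation (addE G u v))
    (hot : ∀ a b, ot.dir a b = true ↔ (o.dir a b = true ∨ (a = u ∧ b = v))) :
    Invariant1 ot ∨
      ∃ p w, IsPathFrom ot p u w ∧ ot.outDeg w + 1 < ot.outDeg u := by
  have hdeq := outDeg_insert o u v hE ot hot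
  by_cases hI : Invariant1 ot
  · exact Or.inl hI
  right
  unfold Invariant1 at hI
  push_neg at hI
  obtain ⟨p, a, b, hpath, himp⟩ := hI
  by_cases hau : a = u
  · subst hau
    exact ⟨p, b, hpath, himp⟩
  obtain ⟨⟨hnd, hlen, hch⟩, hhd, hlast⟩ := hpath
  have hch' : List.Chain' (fun x y => o.dir x y = true ∨ (x = u ∧ y = v)) p :=
    hch.imp fun x y h => (hot x y).mp h
  rcases chain_split _ u v p hch' with hcho | ⟨l₁, l₂, rfl⟩
  · -- no new edge: p is a path in o, contradiction
    have h1 : o.outDeg a ≤ o.outDeg b + 1 := hinv p a b ⟨⟨hnd, hlen, hcho⟩, hhd, hlast⟩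
    rw [hdeq a, hdeq b, if_neg hau] at himp
    by_cases hbu : b = u
    · subst hbu
      rw [if_pos rfl] at himp
      omega
    · rw [if_neg hbu] at himp
      omega
  · -- p = l₁ ++ u :: v :: l₂
    -- nodup facts
    rw [show l₁ ++ u :: v :: l₂ = (l₁ ++ [u]) ++ (v :: l₂) by simp] at hnd hch' hhd hlast hlen
    rw [List.nodup_append] at hnd
    obtain ⟨hnd1, hnd2, hdisj⟩ := hnd
    have hvl₂ : v ∉ l₂ := by simp at hnd2; tauto
    have hul₂ : u ∉ v :: l₂ := fun h => hdisj u (by simp) u h rfl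
    have hvl₁ : v ∉ l₁ ++ [u] := fun h => hdisj v h v (by simp) rfl
    -- l₁ ≠ []
    have hl₁ : l₁ ≠ [] := by
      rintro rfl
      simp at hhd
      exact hau hhd.symm
    obtain ⟨c, l₁', rfl⟩ := List.exists_cons_of_ne_nil hl₁
    -- prefix chain and suffix chain
    replace hch' := List.isChain_append.mp hch'
    obtain ⟨hchA, hchB, _⟩ := hch'
    have hchA' : List.Chain' (fun x y => o.dir x y = true) ((c :: l₁') ++ [u]) :=
      chain_restrict _ u v _ hchA (by
        intro x hx hxv
        subst hxv
        exact hvl₁ (List.mem_of_mem_tail hx))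
    have hchB' : List.Chain' (fun x y => o.dir x y = true) (v :: l₂) :=
      chain_restrict _ u v _ hchB (by
        rintro x hx rfl
        exact hvl₂ hx)
    -- head a
    have hhd' : a = c := by simpa using hhd.symm
    subst hhd'
    -- prefix path from a to u
    have hpre : IsPathFrom o ((a :: l₁') ++ [u]) a u :=
      ⟨⟨hnd1, by simp, hchA'⟩, by simp, List.getLast?_concat⟩
    have h1 : o.outDeg a ≤ o.outDeg u + 1 := hinv _ a u hpre
    rcases List.eq_nil_or_concat l₂ with rfl | ⟨l₂', d, hcat⟩
    · -- l₂ = [] : b = v, contradiction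
      have hbv : b = v := by
        rw [List.getLast?_concat] at hlast
        exact (Option.some.inj hlast).symm
      subst hbv
      rw [hdeq a, hdeq b, if_neg hau, if_neg (Ne.symm hne)] at himp
      omega
    · -- l₂ = l₂' ++ [d] : b = d, suffix path v → b, and improving path u :: v :: l₂
      rw [List.concat_eq_append] at hcat
      subst hcat
      have hbd : b = d := by
        rw [show (a :: l₁') ++ [u] ++ (v :: (l₂' ++ [d]))
              = ((a :: l₁') ++ [u] ++ (v :: l₂')) ++ [d] by simp,
           List.getLast?_concat] at hlast
        exact (Option.some.inj hlast).symm
      subst hbd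
      have hbv : b ≠ v := by
        rintro rfl
        exact hvl₂ (by simp)
      have hbu : b ≠ u := by
        rintro rfl
        exact hul₂ (by simp)
      have hsuf : IsPathFrom o (v :: (l₂' ++ [b])) v b :=
        ⟨⟨hnd2, by simp, hchB'⟩, rfl, by
          rw [show v :: (l₂' ++ [b]) = (v :: l₂') ++ [b] by simp, List.getLast?_concat]⟩
      have h2 : o.outDeg v ≤ o.outDeg b + 1 := hinv _ v b hsuf
      refine ⟨u :: v :: (l₂' ++ [b]), b, ⟨⟨?_, by simp, ?_⟩, rfl, ?_⟩, ?_⟩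
      · -- nodup
        exact List.nodup_cons.mpr ⟨hul₂, hnd2⟩
      · -- chain in ot
        refine List.isChain_cons_cons.mpr ⟨(hot u v).mpr (Or.inr ⟨rfl, rfl⟩), ?_⟩
        exact hchB.imp fun x y h => (hot x y).mpr h
      · -- getLast
        rw [show u :: v :: (l₂' ++ [b]) = (u :: v :: l₂') ++ [b] by simp, List.getLast?_concat]
      · -- arithmetic
        rw [hdeq b, hdeq u, if_neg hbu, if_pos rfl]
        rw [hdeq a, hdeq b, if_neg hau, if_neg hbu] at himp
        omega
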